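/- For n ≥ 50 and k ≤ √n, the quantity (1/(2(2n-2k+1))) · ∏_{j=1}^{k-1} (2n-4j)/(2n-2j+1) is at least 1/(9n). -/

import Mathlib

lemma sum_odd_cast (m : ℕ) :
    ∑ j ∈ Finset.Icc 1 m, (2 * (j : ℝ) + 1) = (m : ℝ) ^ 2 + 2 * m := by
  induction m with
  | zero => simp
  | succ m ih =>
      rw [Finset.sum_Icc_succ_top (by omega), ih]
      push_cast; ring

open Finset in
/-- For integers `n ≥ 50` and `1 ≤ k ≤ √n`,
`(1/(2(2n-2k+1))) · ∏_{j=1}^{k-1} (2n-4j)/(2n-2j+1) ≥ 1/(9n)`. -/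
theorem product_lower_bound (n k : ℕ) (hn : 50 ≤ n) (hk : 1 ≤ k)
    (hksqrt : (k : ℝ) ≤ Real.sqrt n) :
    1 / (9 * (n : ℝ)) ≤
      (1 / (2 * (2 * (n : ℝ) - 2 * k + 1))) *
        ∏ j ∈ Finset.Icc 1 (k - 1),
          (2 * (n : ℝ) - 4 * j) / (2 * (n : ℝ) - 2 * j + 1) := by
  have hn50 : (50 : ℝ) ≤ (n : ℝ) := by exact_mod_cast hn
  have hk1 : (1 : ℝ) ≤ (k : ℝ) := by exact_mod_cast hk
  set s := Real.sqrt (n : ℝ) with hsdef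
  have hs0 : 0 ≤ s := Real.sqrt_nonneg _
  have hs2 : s * s = (n : ℝ) := Real.mul_self_sqrt (by linarith)
  have hs7 : 7 ≤ s := by nlinarith
  have hjle : ∀ j ∈ Finset.Icc 1 (k - 1), (j : ℝ) ≤ s - 1 := by
    intro j hj
    simp only [Finset.mem_Icc] at hj
    have h1 : j + 1 ≤ k := by omega
    have h2 : (j : ℝ) + 1 ≤ (k : ℝ) := by exact_mod_cast h1
    linarith
  have hD : (0 : ℝ) < 2 * (n : ℝ) - 4 * s + 4 := by nlinarith
  have hden : ∀ j ∈ Finset.Icc 1 (k - 1),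
      2 * (n : ℝ) - 4 * s + 4 ≤ 2 * (n : ℝ) - 4 * j := by
    intro j hj; have := hjle j hj; linarith
  -- Step 1: each factor is at least exp(-(2j+1)/D)
  have hfac : ∀ j ∈ Finset.Icc 1 (k - 1),
      Real.exp (-((2 * (j : ℝ) + 1) / (2 * (n : ℝ) - 4 * s + 4))) ≤
        (2 * (n : ℝ) - 4 * j) / (2 * (n : ℝ) - 2 * j + 1) := by
    intro j hj
    have h1 := hden j hj
    have ha : (0 : ℝ) < 2 * (n : ℝ) - 4 * j := lt_of_lt_of_le hD h1
    have hj0 : (0 : ℝ) ≤ (j : ℝ) := Nat.cast_nonneg j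
    have hb : (0 : ℝ) < 2 * (n : ℝ) - 2 * j + 1 := by linarith
    have hu : (2 * (j : ℝ) + 1) / (2 * (n : ℝ) - 4 * j) ≤
        (2 * (j : ℝ) + 1) / (2 * (n : ℝ) - 4 * s + 4) :=
      div_le_div_of_nonneg_left (by linarith) hD h1
    have step : Real.exp (-((2 * (j : ℝ) + 1) / (2 * (n : ℝ) - 4 * j))) ≤
        (2 * (n : ℝ) - 4 * j) / (2 * (n : ℝ) - 2 * j + 1) := by
      set u := (2 * (j : ℝ) + 1) / (2 * (n : ℝ) - 4 * j) with hu'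
      have h3 : 1 + u ≤ Real.exp u := by linarith [Real.add_one_le_exp u]
      rw [Real.exp_neg, inv_eq_one_div, div_le_div_iff₀ (Real.exp_pos u) hb]
      have h2 : 2 * (n : ℝ) - 2 * j + 1 = (2 * (n : ℝ) - 4 * j) * (1 + u) := by
        rw [hu']; linear_combination -(div_mul_cancel₀ (2 * (j : ℝ) + 1) ha.ne')
      have h4 : (2 * (n : ℝ) - 4 * j) * (1 + u) ≤
          (2 * (n : ℝ) - 4 * j) * Real.exp u :=
        mul_le_mul_of_nonneg_left h3 ha.le
      linarith
    calc Real.exp (-((2 * (j : ℝ) + 1) / (2 * (n : ℝ) - 4 * s + 4)))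
        ≤ Real.exp (-((2 * (j : ℝ) + 1) / (2 * (n : ℝ) - 4 * j))) :=
          Real.exp_le_exp.mpr (by linarith)
      _ ≤ _ := step
  -- Step 2: product bound via exp of sum
  have hprod : Real.exp (∑ j ∈ Finset.Icc 1 (k - 1),
        -((2 * (j : ℝ) + 1) / (2 * (n : ℝ) - 4 * s + 4))) ≤
      ∏ j ∈ Finset.Icc 1 (k - 1),
        (2 * (n : ℝ) - 4 * j) / (2 * (n : ℝ) - 2 * j + 1) := by
    rw [Real.exp_sum]
    exact Finset.prod_le_prod (fun j _ => (Real.exp_pos _).le) hfac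
  -- Step 3: the sum of exponents is small
  have hsum : ∑ j ∈ Finset.Icc 1 (k - 1),
      (2 * (j : ℝ) + 1) / (2 * (n : ℝ) - 4 * s + 4) ≤ 7 / 10 := by
    have hkc : ((k - 1 : ℕ) : ℝ) = (k : ℝ) - 1 := by
      have h1 : (1 : ℕ) ≤ k := hk
      push_cast [h1]; ring
    have heq : ∑ j ∈ Finset.Icc 1 (k - 1),
        (2 * (j : ℝ) + 1) / (2 * (n : ℝ) - 4 * s + 4)
        = ((k : ℝ) ^ 2 - 1) / (2 * (n : ℝ) - 4 * s + 4) := by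
      rw [← Finset.sum_div, sum_odd_cast (k - 1), hkc]
      ring_nf
    rw [heq, div_le_iff₀ hD]
    have hk2 : (k : ℝ) ^ 2 ≤ (n : ℝ) := by nlinarith
    nlinarith
  -- Step 4: exp(-7/10) ≥ 4/9
  have hexp : (4 : ℝ) / 9 ≤ Real.exp (-(7 / 10)) := by
    have hquart : Real.exp (7 / 40) ≤ 40 / 33 := by
      have h2 : (1 : ℝ) - 7 / 40 ≤ Real.exp (-(7 / 40)) := by
        linarith [Real.add_one_le_exp (-(7 / 40 : ℝ))]
      have hmul : Real.exp (-(7 / 40)) * Real.exp (7 / 40) = 1 := by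
        rw [← Real.exp_add]; norm_num
      nlinarith [Real.exp_pos (7 / 40 : ℝ), Real.exp_pos (-(7 / 40) : ℝ)]
    have hpow : Real.exp (7 / 10) = Real.exp (7 / 40) ^ (4 : ℕ) := by
      rw [← Real.exp_nat_mul]; norm_num
    have h1 : Real.exp (7 / 10) ≤ (40 / 33 : ℝ) ^ (4 : ℕ) := by
      rw [hpow]
      exact pow_le_pow_left₀ (Real.exp_pos _).le hquart 4
    have h2 : Real.exp (7 / 10) ≤ 9 / 4 := by
      refine h1.trans ?_; norm_num
    have hmul : Real.exp (-(7 / 10)) * Real.exp (7 / 10) = 1 := by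
      rw [← Real.exp_add]; norm_num
    nlinarith [Real.exp_pos (7 / 10 : ℝ), Real.exp_pos (-(7 / 10) : ℝ)]
  -- combine: product ≥ 4/9
  have hP : (4 : ℝ) / 9 ≤ ∏ j ∈ Finset.Icc 1 (k - 1),
      (2 * (n : ℝ) - 4 * j) / (2 * (n : ℝ) - 2 * j + 1) := by
    refine le_trans (le_trans hexp (Real.exp_le_exp.mpr ?_)) hprod
    rw [Finset.sum_neg_distrib]
    linarith
  -- prefactor bound
  have hbpos : (0 : ℝ) < 2 * (n : ℝ) - 2 * (k : ℝ) + 1 := by nlinarith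
  have hA : 1 / (4 * (n : ℝ)) ≤ 1 / (2 * (2 * (n : ℝ) - 2 * (k : ℝ) + 1)) :=
    one_div_le_one_div_of_le (by linarith) (by linarith)
  calc 1 / (9 * (n : ℝ)) = (1 / (4 * (n : ℝ))) * (4 / 9) := by
        field_simp
    _ ≤ (1 / (2 * (2 * (n : ℝ) - 2 * (k : ℝ) + 1))) *
        ∏ j ∈ Finset.Icc 1 (k - 1),
          (2 * (n : ℝ) - 4 * j) / (2 * (n : ℝ) - 2 * j + 1) :=
      mul_le_mul hA hP (by norm_num)
        (le_of_lt (div_pos one_pos (by linarith)))
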